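/- Let P be a penny configuration in general position and let X, Y, Z ∈ P be pairwise at distance exactly 1, each of degree 5. Then either some point W ∈ P \ {X,Y,Z} is at distance exactly 1 from at least two of X, Y, Z, or the following holds: the set N of points of P \ {X,Y,Z} at distance exactly 1 from at least one of X, Y, Z has exactly 9 elements, and N admits a cyclic ordering w₁, w₂, …, w₉ in which every two cyclically consecutive points are at distance exactly 1 (i.e., dist(wᵢ, wᵢ₊₁) = 1 for all i, indices modulo 9). -/

import Mathlib

open Real EuclideanGeometry

/-- The Euclidean plane. -/
abbrev Pt := EuclideanSpace ℝ (Fin 2)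

/-- A penny configuration in general position: a finite set of points in the plane
such that any two distinct points are at distance at least 1 and no three points
are collinear. -/
def PennyGP (P : Finset Pt) : Prop :=
  (∀ p ∈ P, ∀ q ∈ P, p ≠ q → 1 ≤ dist p q) ∧
  (∀ p ∈ P, ∀ q ∈ P, ∀ r ∈ P, p ≠ q → p ≠ r → q ≠ r →
    ¬ Collinear ℝ ({p, q, r} : Set Pt))

/-- The degree of a point `A` in the penny graph of `P`: the number of points of `P`
at distance exactly 1 from `A`. -/
noncomputable def deg (P : Finset Pt) (A : Pt) : ℕ :=
  {q : Pt | q ∈ P ∧ dist A q = 1}.ncard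


open Complex

section MobiusAux

noncomputable def eC (t : ℝ) : ℂ := Complex.exp (t * Complex.I)

lemma abs_eC (t : ℝ) : ‖eC t‖ = 1 := by
  simp [eC, Complex.norm_exp]

lemma eC_add_two_pi (t : ℝ) : eC (t + 2*π) = eC t := by
  unfold eC
  rw [show ((t + 2*π : ℝ) : ℂ) * Complex.I = t * Complex.I + 2*π*Complex.I by push_cast; ring,
    Complex.exp_add]
  simp [Complex.exp_two_pi_mul_I]

lemma eC_zero : eC 0 = 1 := by simp [eC]

lemma eC_re (t : ℝ) : (eC t).re = Real.cos t := by
  simp [eC, Complex.exp_mul_I, Complex.cos_ofReal_re]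

lemma eC_im (t : ℝ) : (eC t).im = Real.sin t := by
  simp [eC, Complex.exp_mul_I, Complex.sin_ofReal_re]

lemma sq_abs_sub_eC (s t : ℝ) : ‖eC s - eC t‖^2 = 2 - 2*Real.cos (s - t) := by
  rw [← Complex.normSq_eq_norm_sq, Complex.normSq_apply]
  simp only [Complex.sub_re, Complex.sub_im, eC_re, eC_im, Real.cos_sub]
  nlinarith [Real.sin_sq_add_cos_sq s, Real.sin_sq_add_cos_sq t]

lemma dist_eC_sq (c : ℂ) (s t : ℝ) : dist (c + eC s) (c + eC t)^2 = 2 - 2*Real.cos (s - t) := by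
  rw [Complex.dist_eq, show c + eC s - (c + eC t) = eC s - eC t by ring, sq_abs_sub_eC]

lemma eC_arg {z : ℂ} (h : ‖z‖ = 1) : eC (Complex.arg z) = z := by
  unfold eC
  have := Complex.norm_mul_exp_arg_mul_I z
  rw [h] at this; simpa using this

lemma pi3_le_pi : π/3 ≤ π := by linarith [Real.pi_pos]

lemma cos_two_pi_thirds : Real.cos (2*π/3) = -(1/2) := by
  rw [show (2*π/3 : ℝ) = π - π/3 by ring, Real.cos_pi_sub, Real.cos_pi_div_three]

lemma sin_two_pi_thirds : Real.sin (2*π/3) = Real.sqrt 3 / 2 := by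
  rw [show (2*π/3 : ℝ) = π - π/3 by ring, Real.sin_pi_sub, Real.sin_pi_div_three]

/-- On `(0, 2π]`, `cos y < 1/2` pins `y` into `(π/3, 5π/3)`. -/
lemma cos_window {y : ℝ} (h0 : 0 < y) (h1 : y ≤ 2*π) (h : Real.cos y < 1/2) :
    π/3 < y ∧ y < 5*π/3 := by
  have hπ := Real.pi_pos
  rcases le_or_gt y π with hy | hy
  · constructor
    · by_contra hc
      push_neg at hc
      have := Real.cos_le_cos_of_nonneg_of_le_pi (le_of_lt h0) pi3_le_pi hc
      rw [Real.cos_pi_div_three] at this; linarith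
    · linarith
  · have hcos : Real.cos (2*π - y) = Real.cos y := by
      rw [Real.cos_sub, Real.cos_two_pi, Real.sin_two_pi]; ring_nf
    constructor
    · linarith
    · by_contra hc
      push_neg at hc
      have h2 : 2*π - y ≤ π/3 := by linarith
      have h3 : (0:ℝ) ≤ 2*π - y := by linarith
      have := Real.cos_le_cos_of_nonneg_of_le_pi h3 pi3_le_pi h2
      rw [Real.cos_pi_div_three, hcos] at this; linarith

lemma gap_ge {d : ℝ} (h1 : 0 < d) (h2 : d < π) (h : (1:ℝ) ≤ 2 - 2*Real.cos d) : π/3 ≤ d := by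
  by_contra hc
  push_neg at hc
  have := Real.cos_lt_cos_of_nonneg_of_le_pi (le_of_lt h1) pi3_le_pi hc
  rw [Real.cos_pi_div_three] at this; linarith

lemma bridge_dist_sq (c : ℂ) (τ β γ : ℝ) :
    dist (c + eC (τ - β)) ((c + eC τ) + eC (τ + π + γ)) ^ 2
      = 3 + 2*Real.cos (β+γ) - 2*Real.cos β - 2*Real.cos γ := by
  have hfac : c + eC (τ - β) - ((c + eC τ) + eC (τ + π + γ))
      = eC τ * (eC (-β) - 1 + eC γ) := by
    unfold eC
    rw [show ((τ - β : ℝ) : ℂ) * Complex.I = τ * Complex.I + (-β : ℝ) * Complex.I by push_cast; ring,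
      show ((τ + π + γ : ℝ) : ℂ) * Complex.I = τ * Complex.I + ((π:ℝ) * Complex.I + (γ:ℝ) * Complex.I) by push_cast; ring,
      Complex.exp_add, Complex.exp_add, Complex.exp_add, Complex.exp_pi_mul_I]
    push_cast
    ring
  rw [Complex.dist_eq, hfac, norm_mul, show ‖eC τ‖ = 1 from abs_eC τ, one_mul,
    ← Complex.normSq_eq_norm_sq, Complex.normSq_apply]
  simp only [Complex.add_re, Complex.add_im, Complex.sub_re, Complex.sub_im, eC_re, eC_im,
    Complex.one_re, Complex.one_im, Real.cos_neg, Real.sin_neg, Real.cos_add, Real.sin_add]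
  nlinarith [Real.sin_sq_add_cos_sq β, Real.sin_sq_add_cos_sq γ]

lemma bridge_forces {β γ : ℝ} (hβ1 : π/3 < β) (hβ2 : β < 2*π/3)
    (hγ1 : π/3 < γ) (hγ2 : γ < 2*π/3)
    (h : (1:ℝ) ≤ 3 + 2*Real.cos (β+γ) - 2*Real.cos β - 2*Real.cos γ) : π ≤ β + γ := by
  have hπ := Real.pi_pos
  have hcc : Real.cos β + Real.cos γ
      = 2 * Real.cos ((β+γ)/2) * Real.cos ((β-γ)/2) := Real.cos_add_cos β γ
  have hhalf : Real.cos ((β+γ)/2) ^ 2 = 1/2 + Real.cos (β+γ)/2 := by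
    have := Real.cos_sq ((β+γ)/2)
    rwa [show 2*((β+γ)/2) = β+γ by ring] at this
  set cc := Real.cos ((β+γ)/2) with hccdef
  set dd := Real.cos ((β-γ)/2) with hdddef
  have hlt : cc < dd := by
    have h1 : |(β-γ)/2| < (β+γ)/2 := by
      rw [abs_lt]; constructor <;> linarith
    have h2 : dd = Real.cos |(β-γ)/2| := by rw [Real.cos_abs]
    rw [h2]
    exact Real.cos_lt_cos_of_nonneg_of_le_pi (abs_nonneg _) (by linarith) h1
  have hcc0 : cc ≤ 0 := by nlinarith
  by_contra hc
  push_neg at hc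
  have : 0 < cc := by
    apply Real.cos_pos_of_mem_Ioo
    constructor
    · show -(π/2) < (β+γ)/2; linarith
    · show (β+γ)/2 < π/2; linarith
  linarith

lemma bridge_eq {β γ : ℝ} (h : β + γ = π) :
    (3:ℝ) + 2*Real.cos (β+γ) - 2*Real.cos β - 2*Real.cos γ = 1 := by
  have hγ : γ = π - β := by linarith
  rw [h, hγ, Real.cos_pi_sub, Real.cos_pi]; ring

lemma dist_one_of_sq {p q : ℂ} (h : dist p q ^ 2 = 1) : dist p q = 1 := by
  have h0 : dist p q = Real.sqrt 1 := by
    rw [← h, Real.sqrt_sq dist_nonneg]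
  simpa using h0

lemma eC_pi : eC π = -1 := by unfold eC; exact_mod_cast Complex.exp_pi_mul_I

lemma eC_ext {s : ℝ} {z : ℂ} (hre : Real.cos s = z.re) (him : Real.sin s = z.im) : eC s = z := by
  apply Complex.ext
  · rw [eC_re]; exact hre
  · rw [eC_im]; exact him

lemma cos_4pi3 : Real.cos (4*π/3) = -(1/2) := by
  rw [show (4*π/3 : ℝ) = π + π/3 by ring, Real.cos_add, Real.cos_pi, Real.sin_pi,
    Real.cos_pi_div_three]; ring

lemma sin_4pi3 : Real.sin (4*π/3) = -(Real.sqrt 3/2) := by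
  rw [show (4*π/3 : ℝ) = π + π/3 by ring, Real.sin_add, Real.cos_pi, Real.sin_pi,
    Real.sin_pi_div_three]; ring

lemma one_add_eC_2pi3 : (1:ℂ) + eC (2*π/3) = eC (π/3) := by
  apply Complex.ext <;>
    simp only [Complex.add_re, Complex.add_im, Complex.one_re, Complex.one_im, eC_re, eC_im,
      cos_two_pi_thirds, sin_two_pi_thirds, Real.cos_pi_div_three, Real.sin_pi_div_three] <;> ring

lemma eC_pi3_add_neg : eC (π/3) + eC (-(π/3)) = 1 := by
  apply Complex.ext <;>
    simp only [Complex.add_re, Complex.add_im, Complex.one_re, Complex.one_im, eC_re, eC_im,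
      Real.cos_neg, Real.sin_neg, Real.cos_pi_div_three, Real.sin_pi_div_three] <;> ring

lemma eC_pi3_add_4pi3 : eC (π/3) + eC (4*π/3) = 0 := by
  apply Complex.ext <;>
    simp only [Complex.add_re, Complex.add_im, Complex.zero_re, Complex.zero_im, eC_re, eC_im,
      cos_4pi3, sin_4pi3, Real.cos_pi_div_three, Real.sin_pi_div_three] <;> ring

lemma cos_lt_half_of_dist {c : ℂ} {s t : ℝ} (h : 1 < dist (c + eC s) (c + eC t)) :
    Real.cos (s - t) < 1/2 := by
  have h0 : (0:ℝ) ≤ dist (c + eC s) (c + eC t) := dist_nonneg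
  have h2 : 1 < dist (c + eC s) (c + eC t)^2 := by nlinarith
  rw [dist_eC_sq] at h2; linarith

noncomputable def argp (z : ℂ) : ℝ :=
  if Complex.arg z < 0 then Complex.arg z + 2*π else Complex.arg z

lemma windowA {a : ℂ} (h1 : ‖a‖ = 1) (h2 : 1 < dist a 1)
    (h3 : 1 < dist a (eC (π/3))) :
    a = eC (argp a) ∧ 2*π/3 < argp a ∧ argp a < 5*π/3 := by
  have hπ := Real.pi_pos
  set t0 := Complex.arg a with ht0
  have hb1 : -π < t0 := Complex.neg_pi_lt_arg a
  have hb2 : t0 ≤ π := Complex.arg_le_pi a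
  have hEa : eC t0 = a := eC_arg h1
  set θ := argp a with hθdef
  have hEθ : a = eC θ := by
    rw [hθdef, argp, ← ht0]
    split
    · rw [eC_add_two_pi, hEa]
    · rw [hEa]
  -- first constraint: cos θ < 1/2 with θ ∈ (0, 2π]
  have hc1 : Real.cos (θ - 0) < 1/2 := by
    apply cos_lt_half_of_dist (c := 0)
    rw [zero_add, zero_add, eC_zero, ← hEθ]; exact h2
  rw [sub_zero] at hc1
  have hθpos : 0 < θ ∧ θ ≤ 2*π := by
    rw [hθdef, argp, ← ht0]
    split
    · constructor <;> [linarith; linarith]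
    · rename_i hge
      push_neg at hge
      rcases lt_or_eq_of_le hge with h | h
      · constructor <;> linarith
      · exfalso
        rw [hθdef, argp, ← ht0, if_neg (by push_neg; exact hge), ← h] at hc1
        rw [Real.cos_zero] at hc1; linarith
  have hw1 := cos_window hθpos.1 hθpos.2 hc1
  -- second constraint
  have hc2 : Real.cos (θ - π/3) < 1/2 := by
    apply cos_lt_half_of_dist (c := 0)
    rw [zero_add, zero_add, ← hEθ]; exact h3
  have hw2 := cos_window (by linarith [hw1.1] : 0 < θ - π/3) (by linarith [hθpos.2]) hc2
  exact ⟨hEθ, by linarith [hw2.1], hw1.2⟩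

lemma windowB {b : ℂ} (h1 : ‖b - 1‖ = 1) (h2 : 1 < dist b 0)
    (h3 : 1 < dist b (eC (π/3))) :
    b = 1 + eC (Complex.arg (b - 1) + 2*π) ∧ 4*π/3 < Complex.arg (b - 1) + 2*π ∧
      Complex.arg (b - 1) + 2*π < 7*π/3 := by
  have hπ := Real.pi_pos
  set t0 := Complex.arg (b - 1) with ht0
  have hb1 : -π < t0 := Complex.neg_pi_lt_arg _
  have hb2 : t0 ≤ π := Complex.arg_le_pi _
  set φ := t0 + 2*π with hφdef
  have hEb : b = 1 + eC φ := by
    rw [hφdef, eC_add_two_pi, ht0, eC_arg h1]; ring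
  have hc1 : Real.cos (φ - π) < 1/2 := by
    apply cos_lt_half_of_dist (c := 1)
    rw [← hEb, show (1:ℂ) + eC π = 0 by rw [eC_pi]; ring]; exact h2
  have hw1 := cos_window (by linarith : (0:ℝ) < φ - π) (by linarith) hc1
  have hc2 : Real.cos (φ - 2*π/3) < 1/2 := by
    apply cos_lt_half_of_dist (c := 1)
    rw [← hEb, one_add_eC_2pi3]; exact h3
  have hw2 := cos_window (by linarith : (0:ℝ) < φ - 2*π/3) (by linarith [hw1.2]) hc2
  exact ⟨hEb, by linarith [hw1.1], by linarith [hw2.2]⟩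

lemma windowC {c : ℂ} (h1 : ‖c - eC (π/3)‖ = 1) (h2 : 1 < dist c 0)
    (h3 : 1 < dist c 1) :
    c = eC (π/3) + eC (Complex.arg (c - eC (π/3))) ∧ 0 < Complex.arg (c - eC (π/3)) ∧
      Complex.arg (c - eC (π/3)) < π := by
  have hπ := Real.pi_pos
  set ψ := Complex.arg (c - eC (π/3)) with hψdef
  have hb1 : -π < ψ := Complex.neg_pi_lt_arg _
  have hb2 : ψ ≤ π := Complex.arg_le_pi _
  have hEc : c = eC (π/3) + eC ψ := by
    rw [hψdef, eC_arg h1]; ring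
  -- constraint wrt Y = 1
  have hc1 : Real.cos (ψ - -(π/3)) < 1/2 := by
    apply cos_lt_half_of_dist (c := eC (π/3))
    rw [← hEc, eC_pi3_add_neg]; exact h3
  rw [sub_neg_eq_add] at hc1
  -- constraint wrt X = 0
  have hc2 : Real.cos (ψ - 4*π/3) < 1/2 := by
    apply cos_lt_half_of_dist (c := eC (π/3))
    rw [← hEc, eC_pi3_add_4pi3]; exact h2
  have hc2' : Real.cos (ψ + 2*π/3) < 1/2 := by
    rwa [show ψ + 2*π/3 = (ψ - 4*π/3) + 2*π by ring, Real.cos_add_two_pi]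
  -- from hc1 : ψ > 0 ∨ ψ < -2π/3
  have hd1 : 0 < ψ ∨ ψ < -(2*π/3) := by
    rcases le_or_gt (ψ + π/3) 0 with h | h
    · right
      have hcc : Real.cos (ψ + π/3 + 2*π) < 1/2 := by rwa [Real.cos_add_two_pi]
      have := cos_window (by linarith : (0:ℝ) < ψ + π/3 + 2*π) (by linarith) hcc
      linarith [this.2]
    · left
      have := cos_window h (by linarith) hc1
      linarith [this.1]
  -- from hc2' : ψ ∈ (-π/3, π)
  have hd2 : -(π/3) < ψ ∧ ψ < π := by
    rcases le_or_gt (ψ + 2*π/3) 0 with h | h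
    · exfalso
      have hcc : Real.cos (ψ + 2*π/3 + 2*π) < 1/2 := by rwa [Real.cos_add_two_pi]
      have := cos_window (by linarith : (0:ℝ) < ψ + 2*π/3 + 2*π) (by linarith) hcc
      linarith [this.2]
    · have := cos_window h (by linarith) hc2'
      constructor <;> linarith [this.1, this.2]
  rcases hd1 with h | h
  · exact ⟨hEc, h, hd2.2⟩
  · exfalso; linarith [hd2.1]

noncomputable def toC : EuclideanSpace ℝ (Fin 2) → ℂ := fun v => ⟨v 0, v 1⟩

lemma dist_toC (a b : EuclideanSpace ℝ (Fin 2)) : dist (toC a) (toC b) = dist a b := by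
  rw [EuclideanSpace.dist_eq, Complex.dist_eq, Complex.norm_def, Complex.normSq_apply]
  simp only [toC, Complex.sub_re, Complex.sub_im, Real.dist_eq, Fin.sum_univ_two]
  rw [_root_.sq_abs, _root_.sq_abs]
  congr 1; ring

lemma eq_eC_pi3 {z : ℂ} (h1 : ‖z‖ = 1) (h2 : ‖z - 1‖ = 1)
    (h3 : 0 ≤ z.im) : z = eC (π/3) := by
  have hs3 : (Real.sqrt 3)^2 = 3 := Real.sq_sqrt (by norm_num)
  have hs3pos : 0 < Real.sqrt 3 := Real.sqrt_pos.mpr (by norm_num)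
  have hn1 : z.re^2 + z.im^2 = 1 := by
    have := Complex.sq_norm z
    rw [h1, Complex.normSq_apply] at this
    nlinarith
  have hn2 : (z.re - 1)^2 + z.im^2 = 1 := by
    have := Complex.sq_norm (z - 1)
    rw [h2, Complex.normSq_apply] at this
    simp only [Complex.sub_re, Complex.sub_im, Complex.one_re, Complex.one_im] at this
    nlinarith
  have hre : z.re = 1/2 := by nlinarith
  have him2 : z.im^2 = 3/4 := by nlinarith
  have hfac : (z.im - Real.sqrt 3/2) * (z.im + Real.sqrt 3/2) = 0 := by
    linear_combination him2 - (1/4) * hs3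
  have him : z.im = Real.sqrt 3/2 := by
    rcases mul_eq_zero.mp hfac with h | h
    · linarith
    · exfalso; linarith
  apply Complex.ext
  · rw [eC_re, Real.cos_pi_div_three, hre]
  · rw [eC_im, Real.sin_pi_div_three, him]

lemma sort3 {α : Type*} (f : α → ℝ) (a b c : α) (hab : f a ≠ f b) (hac : f a ≠ f c)
    (hbc : f b ≠ f c) :
    ∃ p q r, ({p, q, r} : Set α) = {a, b, c} ∧ f p < f q ∧ f q < f r := by
  rcases lt_trichotomy (f a) (f b) with h1 | h1 | h1
  · rcases lt_trichotomy (f b) (f c) with h2 | h2 | h2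
    · exact ⟨a, b, c, rfl, h1, h2⟩
    · exact absurd h2 hbc
    · rcases lt_trichotomy (f a) (f c) with h3 | h3 | h3
      · exact ⟨a, c, b, by ext x; simp; tauto, h3, h2⟩
      · exact absurd h3 hac
      · exact ⟨c, a, b, by ext x; simp; tauto, h3, h1⟩
  · exact absurd h1 hab
  · rcases lt_trichotomy (f a) (f c) with h2 | h2 | h2
    · exact ⟨b, a, c, by ext x; simp; tauto, h1, h2⟩
    · exact absurd h2 hac
    · rcases lt_trichotomy (f b) (f c) with h3 | h3 | h3
      · exact ⟨b, c, a, by ext x; simp; tauto, h3, h2⟩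
      · exact absurd h3 hbc
      · exact ⟨c, b, a, by ext x; simp; tauto, h3, h1⟩

lemma gap_of {c : ℂ} {s t : ℝ} (hst : s < t) (hlt : t - s < π)
    (h : 1 ≤ dist (c + eC s) (c + eC t)) : π/3 ≤ t - s := by
  have h0 : (0:ℝ) ≤ dist (c + eC s) (c + eC t) := dist_nonneg
  have h2 : 1 ≤ dist (c + eC s) (c + eC t)^2 := by nlinarith
  rw [dist_eC_sq] at h2
  rw [show s - t = -(t - s) by ring, Real.cos_neg] at h2
  exact gap_ge (by linarith) hlt h2

lemma dist_gap_one {c : ℂ} {s t : ℝ} (h : t - s = π/3) :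
    dist (c + eC s) (c + eC t) = 1 := by
  apply dist_one_of_sq
  rw [dist_eC_sq, show s - t = -(t - s) by ring, Real.cos_neg, h, Real.cos_pi_div_three]
  norm_num

lemma bridge_apply {c : ℂ} {τ β γ : ℝ} {p q : ℂ}
    (hp : p = c + eC (τ - β)) (hq : q = (c + eC τ) + eC (τ + π + γ))
    (hβ1 : π/3 < β) (hβ2 : β < 2*π/3) (hγ1 : π/3 < γ) (hγ2 : γ < 2*π/3)
    (h : 1 ≤ dist p q) : π ≤ β + γ := by
  have h0 : (0:ℝ) ≤ dist p q := dist_nonneg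
  have h2 : 1 ≤ dist p q ^2 := by nlinarith
  rw [hp, hq, bridge_dist_sq] at h2
  exact bridge_forces hβ1 hβ2 hγ1 hγ2 h2

lemma bridge_one {c : ℂ} {τ β γ : ℝ} {p q : ℂ}
    (hp : p = c + eC (τ - β)) (hq : q = (c + eC τ) + eC (τ + π + γ))
    (h : β + γ = π) : dist p q = 1 := by
  apply dist_one_of_sq
  rw [hp, hq, bridge_dist_sq, bridge_eq h]

lemma eC_sub_two_pi (t : ℝ) : eC (t - 2*π) = eC t := by
  have h := eC_add_two_pi (t - 2*π)
  rw [show t - 2*π + 2*π = t by ring] at h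
  exact h.symm

lemma extract3 {α : Type*} {S : Set α} (h5 : S.ncard = 5) {V W : α}
    (hV : V ∈ S) (hW : W ∈ S) (hVW : V ≠ W) :
    ∃ a b c, a ≠ b ∧ a ≠ c ∧ b ≠ c ∧ S \ {V, W} = {a, b, c} := by
  have hsub : ({V, W} : Set α) ⊆ S := by
    rintro x (rfl | rfl)
    · exact hV
    · exact hW
  have h3 : (S \ {V, W}).ncard = 3 := by
    rw [Set.ncard_diff hsub ((Set.finite_singleton W).insert V), Set.ncard_pair hVW, h5]
  exact Set.ncard_eq_three.mp h3

lemma inj9 {α : Type*} {x1 x2 x3 x4 x5 x6 x7 x8 x9 : α}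
    (h12 : x1 ≠ x2) (h13 : x1 ≠ x3) (h14 : x1 ≠ x4) (h15 : x1 ≠ x5) (h16 : x1 ≠ x6)
    (h17 : x1 ≠ x7) (h18 : x1 ≠ x8) (h19 : x1 ≠ x9)
    (h23 : x2 ≠ x3) (h24 : x2 ≠ x4) (h25 : x2 ≠ x5) (h26 : x2 ≠ x6) (h27 : x2 ≠ x7)
    (h28 : x2 ≠ x8) (h29 : x2 ≠ x9)
    (h34 : x3 ≠ x4) (h35 : x3 ≠ x5) (h36 : x3 ≠ x6) (h37 : x3 ≠ x7) (h38 : x3 ≠ x8)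
    (h39 : x3 ≠ x9)
    (h45 : x4 ≠ x5) (h46 : x4 ≠ x6) (h47 : x4 ≠ x7) (h48 : x4 ≠ x8) (h49 : x4 ≠ x9)
    (h56 : x5 ≠ x6) (h57 : x5 ≠ x7) (h58 : x5 ≠ x8) (h59 : x5 ≠ x9)
    (h67 : x6 ≠ x7) (h68 : x6 ≠ x8) (h69 : x6 ≠ x9)
    (h78 : x7 ≠ x8) (h79 : x7 ≠ x9)
    (h89 : x8 ≠ x9) :
    Function.Injective ![x1, x2, x3, x4, x5, x6, x7, x8, x9] := by
  intro i j hij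
  fin_cases i <;> fin_cases j <;>
    first
      | rfl
      | exact absurd hij (by first
          | exact h12
          | exact h12.symm
          | exact h13
          | exact h13.symm
          | exact h14
          | exact h14.symm
          | exact h15
          | exact h15.symm
          | exact h16
          | exact h16.symm
          | exact h17
          | exact h17.symm
          | exact h18
          | exact h18.symm
          | exact h19
          | exact h19.symm
          | exact h23
          | exact h23.symm
          | exact h24
          | exact h24.symm
          | exact h25
          | exact h25.symm
          | exact h26
          | exact h26.symm
          | exact h27
          | exact h27.symm
          | exact h28
          | exact h28.symm
          | exact h29
          | exact h29.symm
          | exact h34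
          | exact h34.symm
          | exact h35
          | exact h35.symm
          | exact h36
          | exact h36.symm
          | exact h37
          | exact h37.symm
          | exact h38
          | exact h38.symm
          | exact h39
          | exact h39.symm
          | exact h45
          | exact h45.symm
          | exact h46
          | exact h46.symm
          | exact h47
          | exact h47.symm
          | exact h48
          | exact h48.symm
          | exact h49
          | exact h49.symm
          | exact h56
          | exact h56.symm
          | exact h57
          | exact h57.symm
          | exact h58
          | exact h58.symm
          | exact h59
          | exact h59.symm
          | exact h67
          | exact h67.symm
          | exact h68
          | exact h68.symm
          | exact h69
          | exact h69.symm
          | exact h78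
          | exact h78.symm
          | exact h79
          | exact h79.symm
          | exact h89
          | exact h89.symm)

end MobiusAux

set_option maxHeartbeats 2000000 in
/-- Around a unit triangle on vertices of degree 5 in a penny configuration in
general position, either two of the three vertices share a common neighbor other
than the third vertex, or the nine remaining neighbors form a 9-cycle of unit
distances (a Möbius loop). -/

theorem mobius_loop (P : Finset Pt) (hP : PennyGP P) (X Y Z : Pt)
    (hX : X ∈ P) (hY : Y ∈ P) (hZ : Z ∈ P)
    (hXY : dist X Y = 1) (hXZ : dist X Z = 1) (hYZ : dist Y Z = 1)
    (hdX : deg P X = 5) (hdY : deg P Y = 5) (hdZ : deg P Z = 5) :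
    (∃ W ∈ P, W ∉ ({X, Y, Z} : Set Pt) ∧
      ((dist W X = 1 ∧ dist W Y = 1) ∨ (dist W X = 1 ∧ dist W Z = 1) ∨
        (dist W Y = 1 ∧ dist W Z = 1))) ∨
    (∃ w : Fin 9 → Pt, Function.Injective w ∧
      Set.range w =
        {v : Pt | v ∈ P ∧ v ∉ ({X, Y, Z} : Set Pt) ∧
          (dist v X = 1 ∨ dist v Y = 1 ∨ dist v Z = 1)} ∧
      ∀ i : Fin 9, dist (w i) (w (i + 1)) = 1) := by
  by_cases hL : (∃ W ∈ P, W ∉ ({X, Y, Z} : Set Pt) ∧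
      ((dist W X = 1 ∧ dist W Y = 1) ∨ (dist W X = 1 ∧ dist W Z = 1) ∨
        (dist W Y = 1 ∧ dist W Z = 1)))
  · exact Or.inl hL
  right
  have hπ := Real.pi_pos
  have hXYne : X ≠ Y := by intro h; rw [h] at hXY; simp at hXY
  have hXZne : X ≠ Z := by intro h; rw [h] at hXZ; simp at hXZ
  have hYZne : Y ≠ Z := by intro h; rw [h] at hYZ; simp at hYZ
  -- normalization map φ : Pt → ℂ with φ X = 0, φ Y = 1, φ Z = eC (π/3)
  set u : ℂ := toC Y - toC X with hu
  have huabs : ‖u‖ = 1 := by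
    rw [hu, ← Complex.dist_eq, dist_toC, dist_comm]
    exact hXY
  have hune : u ≠ 0 := by
    intro h; rw [h] at huabs; simp at huabs
  set φ0 : Pt → ℂ := fun v => (toC v - toC X) / u with hφ0
  have hφ0dist : ∀ p q : Pt, dist (φ0 p) (φ0 q) = dist p q := by
    intro p q
    rw [hφ0]
    simp only
    rw [Complex.dist_eq, div_sub_div_same, norm_div, huabs, div_one,
      show toC p - toC X - (toC q - toC X) = toC p - toC q by ring, ← Complex.dist_eq, dist_toC]
  set φ : Pt → ℂ :=
    if 0 ≤ (φ0 Z).im then φ0 else fun v => (starRingEnd ℂ) (φ0 v) with hφdef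
  have hφdist : ∀ p q : Pt, dist (φ p) (φ q) = dist p q := by
    rw [hφdef]
    split
    · exact hφ0dist
    · intro p q
      rw [show dist ((starRingEnd ℂ) (φ0 p)) ((starRingEnd ℂ) (φ0 q)) = dist (φ0 p) (φ0 q) from
        Complex.dist_conj_conj _ _]
      exact hφ0dist p q
  have hφ0X : φ0 X = 0 := by rw [hφ0]; simp
  have hφ0Y : φ0 Y = 1 := by rw [hφ0]; simp only; rw [← hu, div_self hune]
  have hφX : φ X = 0 := by
    rw [hφdef]; split <;> simp [hφ0X]
  have hφY : φ Y = 1 := by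
    rw [hφdef]; split <;> simp [hφ0Y]
  have himZ : 0 ≤ (φ Z).im := by
    rw [hφdef]; split
    · assumption
    · rename_i h
      push_neg at h
      simp only [Complex.conj_im]
      linarith
  have hφZ : φ Z = eC (π/3) := by
    apply eq_eC_pi3 _ _ himZ
    · rw [show φ Z = φ Z - 0 by ring, ← hφX, ← Complex.dist_eq, hφdist, dist_comm]
      exact hXZ
    · rw [← hφY, ← Complex.dist_eq, hφdist, dist_comm]
      exact hYZ
  have hφinj : ∀ p q : Pt, φ p = φ q → p = q := by
    intro p q h
    have : dist p q = 0 := by rw [← hφdist, h, dist_self]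
    exact dist_eq_zero.mp this
  -- the three neighbour sets
  have h5X : ({q : Pt | q ∈ P ∧ dist X q = 1}).ncard = 5 := hdX
  have h5Y : ({q : Pt | q ∈ P ∧ dist Y q = 1}).ncard = 5 := hdY
  have h5Z : ({q : Pt | q ∈ P ∧ dist Z q = 1}).ncard = 5 := hdZ
  set SA : Set Pt := {q : Pt | q ∈ P ∧ dist X q = 1} \ {Y, Z} with hSA
  set SB : Set Pt := {q : Pt | q ∈ P ∧ dist Y q = 1} \ {X, Z} with hSB
  set SC : Set Pt := {q : Pt | q ∈ P ∧ dist Z q = 1} \ {X, Y} with hSC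
  -- basic facts for the points of SA
  have hfA : ∀ p ∈ SA, p ∈ P ∧ p ∉ ({X, Y, Z} : Set Pt) ∧ dist p X = 1 ∧
      φ p = eC (argp (φ p)) ∧ 2*π/3 < argp (φ p) ∧ argp (φ p) < 5*π/3 := by
    intro p hp
    obtain ⟨⟨hpP, hpd⟩, hpn⟩ := hp
    have hpd' : dist p X = 1 := by rw [dist_comm]; exact hpd
    have hpX : p ≠ X := by intro h; rw [h] at hpd; simp at hpd
    have hpY : p ≠ Y := by intro h; exact hpn (by rw [h]; left; rfl)
    have hpZ : p ≠ Z := by intro h; exact hpn (by rw [h]; right; rfl)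
    have hnotin : p ∉ ({X, Y, Z} : Set Pt) := by
      intro h
      rcases h with h | h | h
      · exact hpX h
      · exact hpY h
      · exact hpZ h
    have h1Y : 1 < dist p Y := by
      rcases lt_or_eq_of_le (hP.1 p hpP Y hY hpY) with h | h
      · exact h
      · exact absurd ⟨p, hpP, hnotin, Or.inl ⟨hpd', h.symm⟩⟩ hL
    have h1Z : 1 < dist p Z := by
      rcases lt_or_eq_of_le (hP.1 p hpP Z hZ hpZ) with h | h
      · exact h
      · exact absurd ⟨p, hpP, hnotin, Or.inr (Or.inl ⟨hpd', h.symm⟩)⟩ hL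
    have habs : ‖φ p‖ = 1 := by
      rw [show φ p = φ p - 0 by ring, ← hφX, ← Complex.dist_eq, hφdist]
      exact hpd'
    have h1Y' : 1 < dist (φ p) 1 := by rw [← hφY, hφdist]; exact h1Y
    have h1Z' : 1 < dist (φ p) (eC (π/3)) := by rw [← hφZ, hφdist]; exact h1Z
    obtain ⟨he, hw1, hw2⟩ := windowA habs h1Y' h1Z'
    exact ⟨hpP, hnotin, hpd', he, hw1, hw2⟩
  have hfB : ∀ p ∈ SB, p ∈ P ∧ p ∉ ({X, Y, Z} : Set Pt) ∧ dist p Y = 1 ∧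
      φ p = 1 + eC (Complex.arg (φ p - 1) + 2*π) ∧
      4*π/3 < Complex.arg (φ p - 1) + 2*π ∧ Complex.arg (φ p - 1) + 2*π < 7*π/3 := by
    intro p hp
    obtain ⟨⟨hpP, hpd⟩, hpn⟩ := hp
    have hpd' : dist p Y = 1 := by rw [dist_comm]; exact hpd
    have hpY : p ≠ Y := by intro h; rw [h] at hpd; simp at hpd
    have hpX : p ≠ X := by intro h; exact hpn (by rw [h]; left; rfl)
    have hpZ : p ≠ Z := by intro h; exact hpn (by rw [h]; right; rfl)
    have hnotin : p ∉ ({X, Y, Z} : Set Pt) := by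
      intro h
      rcases h with h | h | h
      · exact hpX h
      · exact hpY h
      · exact hpZ h
    have h1X : 1 < dist p X := by
      rcases lt_or_eq_of_le (hP.1 p hpP X hX hpX) with h | h
      · exact h
      · exact absurd ⟨p, hpP, hnotin, Or.inl ⟨h.symm, hpd'⟩⟩ hL
    have h1Z : 1 < dist p Z := by
      rcases lt_or_eq_of_le (hP.1 p hpP Z hZ hpZ) with h | h
      · exact h
      · exact absurd ⟨p, hpP, hnotin, Or.inr (Or.inr ⟨hpd', h.symm⟩)⟩ hL
    have habs : ‖φ p - 1‖ = 1 := by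
      rw [← hφY, ← Complex.dist_eq, hφdist]
      exact hpd'
    have h1X' : 1 < dist (φ p) 0 := by rw [← hφX, hφdist]; exact h1X
    have h1Z' : 1 < dist (φ p) (eC (π/3)) := by rw [← hφZ, hφdist]; exact h1Z
    obtain ⟨he, hw1, hw2⟩ := windowB habs h1X' h1Z'
    exact ⟨hpP, hnotin, hpd', he, hw1, hw2⟩
  have hfC : ∀ p ∈ SC, p ∈ P ∧ p ∉ ({X, Y, Z} : Set Pt) ∧ dist p Z = 1 ∧
      φ p = eC (π/3) + eC (Complex.arg (φ p - eC (π/3))) ∧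
      0 < Complex.arg (φ p - eC (π/3)) ∧ Complex.arg (φ p - eC (π/3)) < π := by
    intro p hp
    obtain ⟨⟨hpP, hpd⟩, hpn⟩ := hp
    have hpd' : dist p Z = 1 := by rw [dist_comm]; exact hpd
    have hpZ : p ≠ Z := by intro h; rw [h] at hpd; simp at hpd
    have hpX : p ≠ X := by intro h; exact hpn (by rw [h]; left; rfl)
    have hpY : p ≠ Y := by intro h; exact hpn (by rw [h]; right; rfl)
    have hnotin : p ∉ ({X, Y, Z} : Set Pt) := by
      intro h
      rcases h with h | h | h
      · exact hpX h
      · exact hpY h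
      · exact hpZ h
    have h1X : 1 < dist p X := by
      rcases lt_or_eq_of_le (hP.1 p hpP X hX hpX) with h | h
      · exact h
      · exact absurd ⟨p, hpP, hnotin, Or.inr (Or.inl ⟨h.symm, hpd'⟩)⟩ hL
    have h1Y : 1 < dist p Y := by
      rcases lt_or_eq_of_le (hP.1 p hpP Y hY hpY) with h | h
      · exact h
      · exact absurd ⟨p, hpP, hnotin, Or.inr (Or.inr ⟨h.symm, hpd'⟩)⟩ hL
    have habs : ‖φ p - eC (π/3)‖ = 1 := by
      rw [← hφZ, ← Complex.dist_eq, hφdist]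
      exact hpd'
    have h1X' : 1 < dist (φ p) 0 := by rw [← hφX, hφdist]; exact h1X
    have h1Y' : 1 < dist (φ p) 1 := by rw [← hφY, hφdist]; exact h1Y
    obtain ⟨he, hw1, hw2⟩ := windowC habs h1X' h1Y'
    exact ⟨hpP, hnotin, hpd', he, hw1, hw2⟩
  -- extract the three remaining neighbours of each hub
  obtain ⟨pa, pb, pc, hab, hac, hbc, hAeq⟩ :=
    extract3 h5X ⟨hY, hXY⟩ ⟨hZ, hXZ⟩ hYZne
  obtain ⟨qa, qb, qc, hab', hac', hbc', hBeq⟩ :=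
    extract3 h5Y ⟨hX, by rw [dist_comm]; exact hXY⟩ ⟨hZ, hYZ⟩ hXZne
  obtain ⟨ra, rb, rc, hab'', hac'', hbc'', hCeq⟩ :=
    extract3 h5Z ⟨hX, by rw [dist_comm]; exact hXZ⟩ ⟨hY, by rw [dist_comm]; exact hYZ⟩ hXYne
  have hAeq' : SA = {pa, pb, pc} := hAeq
  have hBeq' : SB = {qa, qb, qc} := hBeq
  have hCeq' : SC = {ra, rb, rc} := hCeq
  -- angle functions
  set tA : Pt → ℝ := fun p => argp (φ p) with htA
  set tB : Pt → ℝ := fun p => Complex.arg (φ p - 1) + 2*π with htB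
  set tC : Pt → ℝ := fun p => Complex.arg (φ p - eC (π/3)) with htC
  -- sort each hub's neighbours by angle
  have hAdist : ∀ p ∈ SA, ∀ q ∈ SA, p ≠ q → tA p ≠ tA q := by
    intro p hp q hq hne heq
    refine hne (hφinj p q ?_)
    rw [(hfA p hp).2.2.2.1, (hfA q hq).2.2.2.1,
      show argp (φ p) = argp (φ q) from heq]
  have hBdist : ∀ p ∈ SB, ∀ q ∈ SB, p ≠ q → tB p ≠ tB q := by
    intro p hp q hq hne heq
    refine hne (hφinj p q ?_)
    rw [(hfB p hp).2.2.2.1, (hfB q hq).2.2.2.1,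
      show (φ p - 1).arg + 2*π = (φ q - 1).arg + 2*π from heq]
  have hCdist : ∀ p ∈ SC, ∀ q ∈ SC, p ≠ q → tC p ≠ tC q := by
    intro p hp q hq hne heq
    refine hne (hφinj p q ?_)
    rw [(hfC p hp).2.2.2.1, (hfC q hq).2.2.2.1,
      show (φ p - eC (π/3)).arg = (φ q - eC (π/3)).arg from heq]
  have hpamem : pa ∈ SA := by rw [hAeq']; left; rfl
  have hpbmem : pb ∈ SA := by rw [hAeq']; right; left; rfl
  have hpcmem : pc ∈ SA := by rw [hAeq']; right; right; rfl
  have hqamem : qa ∈ SB := by rw [hBeq']; left; rfl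
  have hqbmem : qb ∈ SB := by rw [hBeq']; right; left; rfl
  have hqcmem : qc ∈ SB := by rw [hBeq']; right; right; rfl
  have hramem : ra ∈ SC := by rw [hCeq']; left; rfl
  have hrbmem : rb ∈ SC := by rw [hCeq']; right; left; rfl
  have hrcmem : rc ∈ SC := by rw [hCeq']; right; right; rfl
  obtain ⟨a1, a2, a3, hAset, hA12, hA23⟩ :=
    sort3 tA pa pb pc (hAdist pa hpamem pb hpbmem hab) (hAdist pa hpamem pc hpcmem hac)
      (hAdist pb hpbmem pc hpcmem hbc)
  obtain ⟨b1, b2, b3, hBset, hB12, hB23⟩ :=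
    sort3 tB qa qb qc (hBdist qa hqamem qb hqbmem hab') (hBdist qa hqamem qc hqcmem hac')
      (hBdist qb hqbmem qc hqcmem hbc')
  obtain ⟨c1, c2, c3, hCset, hC12, hC23⟩ :=
    sort3 tC ra rb rc (hCdist ra hramem rb hrbmem hab'') (hCdist ra hramem rc hrcmem hac'')
      (hCdist rb hrbmem rc hrcmem hbc'')
  have hASet : SA = {a1, a2, a3} := by rw [hAeq', ← hAset]
  have hBSet : SB = {b1, b2, b3} := by rw [hBeq', ← hBset]
  have hCSet : SC = {c1, c2, c3} := by rw [hCeq', ← hCset]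
  have ha1 : a1 ∈ SA := by rw [hASet]; left; rfl
  have ha2 : a2 ∈ SA := by rw [hASet]; right; left; rfl
  have ha3 : a3 ∈ SA := by rw [hASet]; right; right; rfl
  have hb1 : b1 ∈ SB := by rw [hBSet]; left; rfl
  have hb2 : b2 ∈ SB := by rw [hBSet]; right; left; rfl
  have hb3 : b3 ∈ SB := by rw [hBSet]; right; right; rfl
  have hc1 : c1 ∈ SC := by rw [hCSet]; left; rfl
  have hc2 : c2 ∈ SC := by rw [hCSet]; right; left; rfl
  have hc3 : c3 ∈ SC := by rw [hCSet]; right; right; rfl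
  -- named facts
  obtain ⟨hPa1, hNa1, hda1, hEa1, hwa1l, hwa1r⟩ := hfA a1 ha1
  obtain ⟨hPa2, hNa2, hda2, hEa2, hwa2l, hwa2r⟩ := hfA a2 ha2
  obtain ⟨hPa3, hNa3, hda3, hEa3, hwa3l, hwa3r⟩ := hfA a3 ha3
  obtain ⟨hPb1, hNb1, hdb1, hEb1, hwb1l, hwb1r⟩ := hfB b1 hb1
  obtain ⟨hPb2, hNb2, hdb2, hEb2, hwb2l, hwb2r⟩ := hfB b2 hb2
  obtain ⟨hPb3, hNb3, hdb3, hEb3, hwb3l, hwb3r⟩ := hfB b3 hb3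
  obtain ⟨hPc1, hNc1, hdc1, hEc1, hwc1l, hwc1r⟩ := hfC c1 hc1
  obtain ⟨hPc2, hNc2, hdc2, hEc2, hwc2l, hwc2r⟩ := hfC c2 hc2
  obtain ⟨hPc3, hNc3, hdc3, hEc3, hwc3l, hwc3r⟩ := hfC c3 hc3
  have hA12' : argp (φ a1) < argp (φ a2) := hA12
  have hA23' : argp (φ a2) < argp (φ a3) := hA23
  have hB12' : Complex.arg (φ b1 - 1) + 2*π < Complex.arg (φ b2 - 1) + 2*π := hB12
  have hB23' : Complex.arg (φ b2 - 1) + 2*π < Complex.arg (φ b3 - 1) + 2*π := hB23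
  have hC12' : Complex.arg (φ c1 - eC (π/3)) < Complex.arg (φ c2 - eC (π/3)) := hC12
  have hC23' : Complex.arg (φ c2 - eC (π/3)) < Complex.arg (φ c3 - eC (π/3)) := hC23
  -- cross-hub distinctness
  have hABne : ∀ p ∈ SA, ∀ q ∈ SB, p ≠ q := by
    intro p hp q hq h
    rw [← h] at hq
    exact hL ⟨p, (hfA p hp).1, (hfA p hp).2.1, Or.inl ⟨(hfA p hp).2.2.1, (hfB p hq).2.2.1⟩⟩
  have hACne : ∀ p ∈ SA, ∀ q ∈ SC, p ≠ q := by
    intro p hp q hq h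
    rw [← h] at hq
    exact hL ⟨p, (hfA p hp).1, (hfA p hp).2.1,
      Or.inr (Or.inl ⟨(hfA p hp).2.2.1, (hfC p hq).2.2.1⟩)⟩
  have hBCne : ∀ p ∈ SB, ∀ q ∈ SC, p ≠ q := by
    intro p hp q hq h
    rw [← h] at hq
    exact hL ⟨p, (hfB p hp).1, (hfB p hp).2.1,
      Or.inr (Or.inr ⟨(hfB p hp).2.2.1, (hfC p hq).2.2.1⟩)⟩
  -- distinctness within hubs
  have hne12 : a1 ≠ a2 := by intro h; rw [h] at hA12'; exact lt_irrefl _ hA12'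
  have hne23 : a2 ≠ a3 := by intro h; rw [h] at hA23'; exact lt_irrefl _ hA23'
  have hne13 : a1 ≠ a3 := by
    intro h; rw [h] at hA12'; exact lt_irrefl _ (hA12'.trans hA23')
  have hne12' : b1 ≠ b2 := by intro h; rw [h] at hB12'; exact lt_irrefl _ hB12'
  have hne23' : b2 ≠ b3 := by intro h; rw [h] at hB23'; exact lt_irrefl _ hB23'
  have hne13' : b1 ≠ b3 := by
    intro h; rw [h] at hB12'; exact lt_irrefl _ (hB12'.trans hB23')
  have hne12'' : c1 ≠ c2 := by intro h; rw [h] at hC12'; exact lt_irrefl _ hC12'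
  have hne23'' : c2 ≠ c3 := by intro h; rw [h] at hC23'; exact lt_irrefl _ hC23'
  have hne13'' : c1 ≠ c3 := by
    intro h; rw [h] at hC12'; exact lt_irrefl _ (hC12'.trans hC23')
  -- gaps within hubs
  have gA12 : π/3 ≤ argp (φ a2) - argp (φ a1) := by
    apply gap_of hA12' (by linarith)
    rw [zero_add, zero_add, ← hEa1, ← hEa2, hφdist]
    exact hP.1 a1 hPa1 a2 hPa2 hne12
  have gA23 : π/3 ≤ argp (φ a3) - argp (φ a2) := by
    apply gap_of hA23' (by linarith)
    rw [zero_add, zero_add, ← hEa2, ← hEa3, hφdist]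
    exact hP.1 a2 hPa2 a3 hPa3 hne23
  have gB12 : π/3 ≤ (Complex.arg (φ b2 - 1) + 2*π) - (Complex.arg (φ b1 - 1) + 2*π) := by
    apply gap_of (c := 1) hB12' (by linarith)
    rw [← hEb1, ← hEb2, hφdist]
    exact hP.1 b1 hPb1 b2 hPb2 hne12'
  have gB23 : π/3 ≤ (Complex.arg (φ b3 - 1) + 2*π) - (Complex.arg (φ b2 - 1) + 2*π) := by
    apply gap_of (c := 1) hB23' (by linarith)
    rw [← hEb2, ← hEb3, hφdist]
    exact hP.1 b2 hPb2 b3 hPb3 hne23'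
  have gC12 : π/3 ≤ Complex.arg (φ c2 - eC (π/3)) - Complex.arg (φ c1 - eC (π/3)) := by
    apply gap_of (c := eC (π/3)) hC12' (by linarith)
    rw [← hEc1, ← hEc2, hφdist]
    exact hP.1 c1 hPc1 c2 hPc2 hne12''
  have gC23 : π/3 ≤ Complex.arg (φ c3 - eC (π/3)) - Complex.arg (φ c2 - eC (π/3)) := by
    apply gap_of (c := eC (π/3)) hC23' (by linarith)
    rw [← hEc2, ← hEc3, hφdist]
    exact hP.1 c2 hPc2 c3 hPc3 hne23''
  -- the three bridges
  have hbr1 : π ≤ (2*π - argp (φ a3)) + ((Complex.arg (φ b1 - 1) + 2*π) - π) := by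
    apply bridge_apply (c := (0:ℂ)) (τ := 0)
      (p := φ a3) (q := φ b1)
      (by rw [show (0:ℝ) - (2*π - argp (φ a3)) = argp (φ a3) - 2*π by ring,
        eC_sub_two_pi, zero_add]; exact hEa3)
      (by rw [show (0:ℝ) + π + ((Complex.arg (φ b1 - 1) + 2*π) - π) =
          Complex.arg (φ b1 - 1) + 2*π by ring, eC_zero, zero_add]; exact hEb1)
      (by linarith) (by linarith) (by linarith) (by linarith)
    rw [hφdist]
    exact hP.1 a3 hPa3 b1 hPb1 (hABne a3 ha3 b1 hb1)
  have hbr2 : π ≤ (8*π/3 - (Complex.arg (φ b3 - 1) + 2*π))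
      + (Complex.arg (φ c1 - eC (π/3)) + π/3) := by
    apply bridge_apply (c := (1:ℂ)) (τ := 2*π/3)
      (p := φ b3) (q := φ c1)
      (by rw [show 2*π/3 - (8*π/3 - (Complex.arg (φ b3 - 1) + 2*π)) =
          (Complex.arg (φ b3 - 1) + 2*π) - 2*π by ring, eC_sub_two_pi]; exact hEb3)
      (by rw [one_add_eC_2pi3, show 2*π/3 + π + (Complex.arg (φ c1 - eC (π/3)) + π/3) =
          Complex.arg (φ c1 - eC (π/3)) + 2*π by ring, eC_add_two_pi]; exact hEc1)
      (by linarith) (by linarith) (by linarith) (by linarith)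
    rw [hφdist]
    exact hP.1 b3 hPb3 c1 hPc1 (hBCne b3 hb3 c1 hc1)
  have hbr3 : π ≤ (4*π/3 - Complex.arg (φ c3 - eC (π/3))) + (argp (φ a1) - π/3) := by
    apply bridge_apply (c := eC (π/3)) (τ := 4*π/3)
      (p := φ c3) (q := φ a1)
      (by rw [show 4*π/3 - (4*π/3 - Complex.arg (φ c3 - eC (π/3))) =
          Complex.arg (φ c3 - eC (π/3)) by ring]; exact hEc3)
      (by rw [eC_pi3_add_4pi3, show 4*π/3 + π + (argp (φ a1) - π/3) =
          argp (φ a1) + 2*π by ring, eC_add_two_pi, zero_add]; exact hEa1)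
      (by linarith) (by linarith) (by linarith) (by linarith)
    rw [hφdist]
    exact hP.1 c3 hPc3 a1 hPa1 ((hACne a1 ha1 c3 hc3).symm)
  -- forcing: all gaps are exactly π/3 and all bridge sums exactly π
  have eqA12 : argp (φ a2) - argp (φ a1) = π/3 := by linarith
  have eqA23 : argp (φ a3) - argp (φ a2) = π/3 := by linarith
  have eqB12 : (Complex.arg (φ b2 - 1) + 2*π) - (Complex.arg (φ b1 - 1) + 2*π) = π/3 := by
    linarith
  have eqB23 : (Complex.arg (φ b3 - 1) + 2*π) - (Complex.arg (φ b2 - 1) + 2*π) = π/3 := by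
    linarith
  have eqC12 : Complex.arg (φ c2 - eC (π/3)) - Complex.arg (φ c1 - eC (π/3)) = π/3 := by
    linarith
  have eqC23 : Complex.arg (φ c3 - eC (π/3)) - Complex.arg (φ c2 - eC (π/3)) = π/3 := by
    linarith
  have eqbr1 : (2*π - argp (φ a3)) + ((Complex.arg (φ b1 - 1) + 2*π) - π) = π := by linarith
  have eqbr2 : (8*π/3 - (Complex.arg (φ b3 - 1) + 2*π))
      + (Complex.arg (φ c1 - eC (π/3)) + π/3) = π := by linarith
  have eqbr3 : (4*π/3 - Complex.arg (φ c3 - eC (π/3))) + (argp (φ a1) - π/3) = π := by linarith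
  -- the nine unit distances
  have hd1 : dist a1 a2 = 1 := by
    have h := dist_gap_one (c := (0:ℂ)) eqA12
    rwa [zero_add, zero_add, ← hEa1, ← hEa2, hφdist] at h
  have hd2 : dist a2 a3 = 1 := by
    have h := dist_gap_one (c := (0:ℂ)) eqA23
    rwa [zero_add, zero_add, ← hEa2, ← hEa3, hφdist] at h
  have hd3 : dist a3 b1 = 1 := by
    have h := bridge_one (c := (0:ℂ)) (τ := 0)
      (p := φ a3) (q := φ b1)
      (by rw [show (0:ℝ) - (2*π - argp (φ a3)) = argp (φ a3) - 2*π by ring,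
        eC_sub_two_pi, zero_add]; exact hEa3)
      (by rw [show (0:ℝ) + π + ((Complex.arg (φ b1 - 1) + 2*π) - π) =
          Complex.arg (φ b1 - 1) + 2*π by ring, eC_zero, zero_add]; exact hEb1)
      eqbr1
    rwa [hφdist] at h
  have hd4 : dist b1 b2 = 1 := by
    have h := dist_gap_one (c := (1:ℂ)) eqB12
    rwa [← hEb1, ← hEb2, hφdist] at h
  have hd5 : dist b2 b3 = 1 := by
    have h := dist_gap_one (c := (1:ℂ)) eqB23
    rwa [← hEb2, ← hEb3, hφdist] at h
  have hd6 : dist b3 c1 = 1 := by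
    have h := bridge_one (c := (1:ℂ)) (τ := 2*π/3)
      (p := φ b3) (q := φ c1)
      (by rw [show 2*π/3 - (8*π/3 - (Complex.arg (φ b3 - 1) + 2*π)) =
          (Complex.arg (φ b3 - 1) + 2*π) - 2*π by ring, eC_sub_two_pi]; exact hEb3)
      (by rw [one_add_eC_2pi3, show 2*π/3 + π + (Complex.arg (φ c1 - eC (π/3)) + π/3) =
          Complex.arg (φ c1 - eC (π/3)) + 2*π by ring, eC_add_two_pi]; exact hEc1)
      eqbr2
    rwa [hφdist] at h
  have hd7 : dist c1 c2 = 1 := by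
    have h := dist_gap_one (c := eC (π/3)) eqC12
    rwa [← hEc1, ← hEc2, hφdist] at h
  have hd8 : dist c2 c3 = 1 := by
    have h := dist_gap_one (c := eC (π/3)) eqC23
    rwa [← hEc2, ← hEc3, hφdist] at h
  have hd9 : dist c3 a1 = 1 := by
    have h := bridge_one (c := eC (π/3)) (τ := 4*π/3)
      (p := φ c3) (q := φ a1)
      (by rw [show 4*π/3 - (4*π/3 - Complex.arg (φ c3 - eC (π/3))) =
          Complex.arg (φ c3 - eC (π/3)) by ring]; exact hEc3)
      (by rw [eC_pi3_add_4pi3, show 4*π/3 + π + (argp (φ a1) - π/3) =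
          argp (φ a1) + 2*π by ring, eC_add_two_pi, zero_add]; exact hEa1)
      eqbr3
    rwa [hφdist] at h
  -- assemble the cycle
  refine ⟨![a1, a2, a3, b1, b2, b3, c1, c2, c3], ?_, ?_, ?_⟩
  · -- injectivity
    exact inj9 hne12 hne13 (hABne a1 ha1 b1 hb1) (hABne a1 ha1 b2 hb2) (hABne a1 ha1 b3 hb3)
      (hACne a1 ha1 c1 hc1) (hACne a1 ha1 c2 hc2) (hACne a1 ha1 c3 hc3)
      hne23 (hABne a2 ha2 b1 hb1) (hABne a2 ha2 b2 hb2) (hABne a2 ha2 b3 hb3)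
      (hACne a2 ha2 c1 hc1) (hACne a2 ha2 c2 hc2) (hACne a2 ha2 c3 hc3)
      (hABne a3 ha3 b1 hb1) (hABne a3 ha3 b2 hb2) (hABne a3 ha3 b3 hb3)
      (hACne a3 ha3 c1 hc1) (hACne a3 ha3 c2 hc2) (hACne a3 ha3 c3 hc3)
      hne12' hne13' (hBCne b1 hb1 c1 hc1) (hBCne b1 hb1 c2 hc2) (hBCne b1 hb1 c3 hc3)
      hne23' (hBCne b2 hb2 c1 hc1) (hBCne b2 hb2 c2 hc2) (hBCne b2 hb2 c3 hc3)
      (hBCne b3 hb3 c1 hc1) (hBCne b3 hb3 c2 hc2) (hBCne b3 hb3 c3 hc3)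
      hne12'' hne13'' hne23''
  · -- range
    have hrange : Set.range ![a1, a2, a3, b1, b2, b3, c1, c2, c3]
        = ({a1, a2, a3, b1, b2, b3, c1, c2, c3} : Set Pt) := by
      simp only [Matrix.range_cons, Matrix.range_empty, Set.singleton_union, Set.union_empty]
    rw [hrange]
    ext v
    constructor
    · intro hv
      rcases hv with h | h | h | h | h | h | h | h | h
      · subst h; exact ⟨hPa1, hNa1, Or.inl hda1⟩
      · subst h; exact ⟨hPa2, hNa2, Or.inl hda2⟩
      · subst h; exact ⟨hPa3, hNa3, Or.inl hda3⟩
      · subst h; exact ⟨hPb1, hNb1, Or.inr (Or.inl hdb1)⟩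
      · subst h; exact ⟨hPb2, hNb2, Or.inr (Or.inl hdb2)⟩
      · subst h; exact ⟨hPb3, hNb3, Or.inr (Or.inl hdb3)⟩
      · subst h; exact ⟨hPc1, hNc1, Or.inr (Or.inr hdc1)⟩
      · subst h; exact ⟨hPc2, hNc2, Or.inr (Or.inr hdc2)⟩
      · subst h; exact ⟨hPc3, hNc3, Or.inr (Or.inr hdc3)⟩
    · rintro ⟨hvP, hvN, hd | hd | hd⟩
      · have hvA : v ∈ SA := by
          refine ⟨⟨hvP, by rwa [dist_comm] at hd⟩, ?_⟩
          intro h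
          rcases h with h | h
          · exact hvN (Or.inr (Or.inl h))
          · exact hvN (Or.inr (Or.inr h))
        rw [hASet] at hvA
        rcases hvA with h | h | h
        · exact Or.inl h
        · exact Or.inr (Or.inl h)
        · exact Or.inr (Or.inr (Or.inl h))
      · have hvB : v ∈ SB := by
          refine ⟨⟨hvP, by rwa [dist_comm] at hd⟩, ?_⟩
          intro h
          rcases h with h | h
          · exact hvN (Or.inl h)
          · exact hvN (Or.inr (Or.inr h))
        rw [hBSet] at hvB
        rcases hvB with h | h | h
        · exact Or.inr (Or.inr (Or.inr (Or.inl h)))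
        · exact Or.inr (Or.inr (Or.inr (Or.inr (Or.inl h))))
        · exact Or.inr (Or.inr (Or.inr (Or.inr (Or.inr (Or.inl h)))))
      · have hvC : v ∈ SC := by
          refine ⟨⟨hvP, by rwa [dist_comm] at hd⟩, ?_⟩
          intro h
          rcases h with h | h
          · exact hvN (Or.inl h)
          · exact hvN (Or.inr (Or.inl h))
        rw [hCSet] at hvC
        rcases hvC with h | h | h
        · exact Or.inr (Or.inr (Or.inr (Or.inr (Or.inr (Or.inr (Or.inl h))))))
        · exact Or.inr (Or.inr (Or.inr (Or.inr (Or.inr (Or.inr (Or.inr (Or.inl h)))))))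
        · exact Or.inr (Or.inr (Or.inr (Or.inr (Or.inr (Or.inr (Or.inr (Or.inr h)))))))
  · -- adjacency
    intro i
    fin_cases i
    · exact hd1
    · exact hd2
    · exact hd3
    · exact hd4
    · exact hd5
    · exact hd6
    · exact hd7
    · exact hd8
    · exact hd9
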